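/- arXiv:0711.3588 — 2 statements merged into one kernel-verified Lean document; each statement's English description precedes it below -/
import Mathlib

section
/- Let G = GL(2, F) act on pairs of 2×2 matrices H = F^{2×2} ⊕ F^{2×2} by simultaneous conjugation, where F is an infinite field of characteristic not two. Then the five invariants tr(X₁), tr(X₂), tr(X₁X₂), det(X₁), det(X₂) are algebraically independent, i.e., the polynomial ring generated by them inside F[H] is a polynomial ring in five variables. -/
set_option maxHeartbeats 1000000


open MvPolynomial

/-- The generic 2×2 matrices `X₁, X₂` over the coordinate ring
`F[H] = F[x_{ij}(k) | 1 ≤ i,j ≤ 2, k = 1,2]` of pairs of 2×2 matrices. -/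
noncomputable def genMat (F : Type*) [CommRing F] (k : Fin 2) :
    Matrix (Fin 2) (Fin 2) (MvPolynomial (Fin 2 × Fin 2 × Fin 2) F) :=
  Matrix.of fun i j => MvPolynomial.X (k, i, j)

/-- Over an infinite field of characteristic not two, the five invariants
`tr(X₁), tr(X₂), tr(X₁X₂), det(X₁), det(X₂)` of pairs of 2×2 matrices under simultaneous
conjugation by `GL(2)` are algebraically independent: they generate a polynomial ring in
five variables inside `F[H]`. -/
theorem stmt_7 (F : Type*) [Field F] [Infinite F] (hchar : ringChar F ≠ 2) :
    AlgebraicIndependent F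
      (![Matrix.trace (genMat F 0),
         Matrix.trace (genMat F 1),
         Matrix.trace (genMat F 0 * genMat F 1),
         Matrix.det (genMat F 0),
         Matrix.det (genMat F 1)] : Fin 5 → MvPolynomial (Fin 2 × Fin 2 × Fin 2) F) := by
  classical
  set R5 := MvPolynomial (Fin 5) F with hR5
  let L := FractionRing R5
  let K := AlgebraicClosure L
  let ι : R5 →ₐ[F] K := IsScalarTower.toAlgHom F R5 K
  have hι : Function.Injective ι := by
    have : (algebraMap R5 K) = (algebraMap L K).comp (algebraMap R5 L) :=
      IsScalarTower.algebraMap_eq R5 L K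
    show Function.Injective (algebraMap R5 K)
    rw [this]
    exact (algebraMap L K).injective.comp (IsFractionRing.injective R5 L)
  set y : Fin 5 → K := fun i => ι (X i) with hy
  have hyind : AlgebraicIndependent F y :=
    (MvPolynomial.algebraicIndependent_X (Fin 5) F).map' hι
  -- find a root t₀ of T² - (y1 - y0) T - (y0 y1 - y3 - y4 - y2)
  obtain ⟨t, ht⟩ := IsAlgClosed.exists_root
    (Polynomial.C (1:K) * Polynomial.X ^ 2 + Polynomial.C (-(y 1 - y 0)) * Polynomial.X +
      Polynomial.C (-(y 0 * y 1 - y 3 - y 4 - y 2)))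
    (by rw [Polynomial.degree_quadratic one_ne_zero]; exact two_ne_zero)
  have ht' : t ^ 2 = (y 1 - y 0) * t + (y 0 * y 1 - y 3 - y 4 - y 2) := by
    have := ht
    simp only [Polynomial.IsRoot, Polynomial.eval_add, Polynomial.eval_mul, Polynomial.eval_pow,
      Polynomial.eval_C, Polynomial.eval_X] at this
    linear_combination this
  -- the substitution
  let w : Fin 2 × Fin 2 × Fin 2 → K := fun p =>
    ![![![0, 1], ![-(y 3), y 0]],
      ![![t, 1], ![y 1 * t - t ^ 2 - y 4, y 1 - t]]] p.1 p.2.1 p.2.2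
  apply AlgebraicIndependent.of_comp (aeval w)
  have e0 : (aeval w) (Matrix.trace (genMat F 0)) = y 0 := by
    simp [genMat, Matrix.trace_fin_two, w]
  have e1 : (aeval w) (Matrix.trace (genMat F 1)) = y 1 := by
    simp [genMat, Matrix.trace_fin_two, w]
  have e3 : (aeval w) (Matrix.det (genMat F 0)) = y 3 := by
    simp [genMat, Matrix.det_fin_two, w]
  have e4 : (aeval w) (Matrix.det (genMat F 1)) = y 4 := by
    simp [genMat, Matrix.det_fin_two, w]
    ring
  have e2 : (aeval w) (Matrix.trace (genMat F 0 * genMat F 1)) = y 2 := by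
    simp [genMat, Matrix.trace_fin_two, Matrix.mul_apply, Fin.sum_univ_two, w]
    linear_combination -ht'
  have hcomp : (aeval w) ∘
      (![Matrix.trace (genMat F 0),
         Matrix.trace (genMat F 1),
         Matrix.trace (genMat F 0 * genMat F 1),
         Matrix.det (genMat F 0),
         Matrix.det (genMat F 1)] : Fin 5 → MvPolynomial (Fin 2 × Fin 2 × Fin 2) F) = y := by
    funext i
    fin_cases i
    · exact e0
    · exact e1
    · exact e2
    · exact e3
    · exact e4
  rw [hcomp]
  exact hyind
end

section
/- Let Q be a quiver with set of vertices Q₀ and arrows Q₁, n a dimension vector, and suppose Q has no closed (oriented) paths. Then every GL(n)-invariant polynomial function on the representation space H(Q,n) = ⊕_{α∈Q₁} F^{n_{α'}×n_{α''}} is constant, i.e., F[H(Q,n)]^{GL(n)} = F. -/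
open Matrix

/-- Let `Q` be a quiver (vertices `V`, arrows `A`, head `hd`, tail `tl`) with no closed
oriented paths, `n` a dimension vector, and `F` an infinite field. Then every
`GL(n)`-invariant polynomial function on the representation space
`H(Q,n) = ⊕_{α} F^{n(hd α) × n(tl α)}` is constant: `F[H(Q,n)]^{GL(n)} = F`. -/
theorem stmt_18 {F : Type*} [Field F] [Infinite F]
    {V A : Type*} [Fintype V] [Fintype A] [DecidableEq V]
    (hd tl : A → V) (n : V → ℕ)
    (hnoclosed : ∀ (s : ℕ) (c : ℕ → A), 0 < s →
      (∀ i, i + 1 < s → tl (c i) = hd (c (i + 1))) → tl (c (s - 1)) ≠ hd (c 0))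
    (f : MvPolynomial (Σ α : A, Fin (n (hd α)) × Fin (n (tl α))) F)
    (hinv : ∀ (g : ∀ v : V, GL (Fin (n v)) F)
        (x : ∀ α : A, Matrix (Fin (n (hd α))) (Fin (n (tl α))) F),
      MvPolynomial.eval (fun s =>
          ((g (hd s.1) : Matrix (Fin (n (hd s.1))) (Fin (n (hd s.1))) F) * x s.1 *
            (((g (tl s.1))⁻¹ : GL (Fin (n (tl s.1))) F) : Matrix (Fin (n (tl s.1))) (Fin (n (tl s.1))) F)) s.2.1 s.2.2) f =
        MvPolynomial.eval (fun s => x s.1 s.2.1 s.2.2) f) :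
    ∃ c : F, f = MvPolynomial.C c := by
  classical
  -- The "arrow" relation on vertices: `r w v` iff there is an arrow with head `v`, tail `w`.
  set r : V → V → Prop := fun w v => ∃ α, hd α = v ∧ tl α = w with hr
  -- Any TransGen-chain gives an oriented path of arrows.
  have key : ∀ w v, Relation.TransGen r w v → ∃ s : ℕ, ∃ c : ℕ → A, 0 < s ∧
      (∀ i, i + 1 < s → tl (c i) = hd (c (i + 1))) ∧ hd (c 0) = v ∧ tl (c (s - 1)) = w := by
    intro w v h
    induction h with
    | single h' =>
      obtain ⟨α, h1, h2⟩ := h'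
      exact ⟨1, fun _ => α, one_pos, by omega, h1, h2⟩
    | tail h' hbv ih =>
      obtain ⟨α, hα1, hα2⟩ := hbv
      obtain ⟨s, c, hs, hc, hc0, hcs⟩ := ih
      refine ⟨s + 1, fun i => if i = 0 then α else c (i - 1), by omega, ?_, by simp [hα1], ?_⟩
      · intro i hi
        rcases Nat.eq_zero_or_pos i with h0 | h0
        · subst h0; simpa using hα2.trans hc0.symm
        · have h1 : ¬ (i = 0) := by omega
          have h2 : ¬ (i + 1 = 0) := by omega
          simp only [h1, h2, if_false]
          have := hc (i - 1) (by omega)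
          convert this using 3 <;> omega
      · have h2 : ¬ (s + 1 - 1 = 0) := by omega
        simp only [h2, if_false]
        simpa using hcs
  have hirr : ∀ v, ¬ Relation.TransGen r v v := by
    intro v hv
    obtain ⟨s, c, hs, hc, hc0, hcs⟩ := key v v hv
    exact hnoclosed s c hs hc (by rw [hc0, hcs])
  -- Height function
  set d : V → ℕ := fun v => (Finset.univ.filter fun w => Relation.TransGen r w v).card with hdd
  have hlt : ∀ α : A, d (tl α) < d (hd α) := by
    intro α
    apply Finset.card_lt_card
    rw [Finset.ssubset_iff_of_subset]
    · refine ⟨tl α, ?_, ?_⟩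
      · simp only [Finset.mem_filter, Finset.mem_univ, true_and]
        exact Relation.TransGen.single ⟨α, rfl, rfl⟩
      · simp only [Finset.mem_filter, Finset.mem_univ, true_and]
        exact hirr _
    · intro u hu
      simp only [Finset.mem_filter, Finset.mem_univ, true_and] at hu ⊢
      exact hu.tail ⟨α, rfl, rfl⟩
  set e : A → ℕ := fun α => d (hd α) - d (tl α) with hee
  have he : ∀ α, 0 < e α := fun α => Nat.sub_pos_of_lt (hlt α)
  -- Key scaling identity: for every `t ≠ 0` and every assignment `y`,
  -- `eval (t^e • y) f = eval y f`.
  have hscale : ∀ (t : F), t ≠ 0 →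
      ∀ y : (Σ α : A, Fin (n (hd α)) × Fin (n (tl α))) → F,
      MvPolynomial.eval (fun s => t ^ e s.1 * y s) f = MvPolynomial.eval y f := by
    intro t ht y
    -- the one-parameter subgroup
    have hinvmat : ∀ v : V, ((t ^ d v) • (1 : Matrix (Fin (n v)) (Fin (n v)) F)) *
        ((t ^ d v)⁻¹ • (1 : Matrix (Fin (n v)) (Fin (n v)) F)) = 1 := by
      intro v
      rw [smul_mul_smul_comm, one_mul, mul_inv_cancel₀ (pow_ne_zero _ ht), one_smul]
    have hinvmat' : ∀ v : V, ((t ^ d v)⁻¹ • (1 : Matrix (Fin (n v)) (Fin (n v)) F)) *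
        ((t ^ d v) • (1 : Matrix (Fin (n v)) (Fin (n v)) F)) = 1 := by
      intro v
      rw [smul_mul_smul_comm, one_mul, inv_mul_cancel₀ (pow_ne_zero _ ht), one_smul]
    set g : ∀ v : V, GL (Fin (n v)) F := fun v =>
      ⟨(t ^ d v) • 1, (t ^ d v)⁻¹ • 1, hinvmat v, hinvmat' v⟩ with hg
    set x : ∀ α : A, Matrix (Fin (n (hd α))) (Fin (n (tl α))) F :=
      fun α => Matrix.of fun i j => y ⟨α, (i, j)⟩ with hx
    have hmain := hinv g x
    have hx' : (fun s : Σ α : A, Fin (n (hd α)) × Fin (n (tl α)) => x s.1 s.2.1 s.2.2) = y := by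
      funext s
      rcases s with ⟨α, i, j⟩
      rfl
    rw [hx'] at hmain
    have hfun : (fun s : Σ α : A, Fin (n (hd α)) × Fin (n (tl α)) => t ^ e s.1 * y s) =
        (fun s : Σ α : A, Fin (n (hd α)) × Fin (n (tl α)) =>
          (((g (hd s.1) : GL (Fin (n (hd s.1))) F) : Matrix (Fin (n (hd s.1))) (Fin (n (hd s.1))) F) * x s.1 *
            (((g (tl s.1))⁻¹ : GL (Fin (n (tl s.1))) F) : Matrix (Fin (n (tl s.1))) (Fin (n (tl s.1))) F)) s.2.1 s.2.2) := by
      funext s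
      rcases s with ⟨α, i, j⟩
      have hgv : ((g (hd α) : GL (Fin (n (hd α))) F) : Matrix (Fin (n (hd α))) (Fin (n (hd α))) F)
          = (t ^ d (hd α)) • 1 := rfl
      have hgv' : (((g (tl α))⁻¹ : GL (Fin (n (tl α))) F) : Matrix (Fin (n (tl α))) (Fin (n (tl α))) F)
          = (t ^ d (tl α))⁻¹ • 1 := rfl
      rw [hgv, hgv']
      simp only [Matrix.smul_mul, Matrix.mul_smul, Matrix.one_mul, Matrix.mul_one,
        smul_smul, Matrix.smul_apply, smul_eq_mul]
      have hcoef : t ^ d (hd α) * (t ^ d (tl α))⁻¹ = t ^ e α := by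
        have hde : d (hd α) = e α + d (tl α) := by
          have := hlt α
          simp only [hee]
          omega
        rw [hde, pow_add, mul_assoc, mul_inv_cancel₀ (pow_ne_zero _ ht), mul_one]
      rw [show x α i j = y ⟨α, (i, j)⟩ from rfl, ← mul_assoc,
        mul_comm ((t ^ d (tl α))⁻¹), hcoef]
    rw [hfun]
    exact hmain
  -- For each `y`, consider the one-variable polynomial `q(T) = f(T^{e α} y)`.
  have hconst : ∀ y : (Σ α : A, Fin (n (hd α)) × Fin (n (tl α))) → F,
      MvPolynomial.eval y f = MvPolynomial.eval (fun _ => (0 : F)) f := by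
    intro y
    set q : Polynomial F := MvPolynomial.aeval
      (fun s : Σ α : A, Fin (n (hd α)) × Fin (n (tl α)) =>
        Polynomial.C (y s) * Polynomial.X ^ e s.1) f with hq
    have heval : ∀ t : F, q.eval t = MvPolynomial.eval (fun s => t ^ e s.1 * y s) f := by
      intro t
      have h1 : Polynomial.aeval t q = MvPolynomial.aeval
          (fun s : Σ α : A, Fin (n (hd α)) × Fin (n (tl α)) =>
            Polynomial.aeval t (Polynomial.C (y s) * Polynomial.X ^ e s.1)) f :=
        MvPolynomial.comp_aeval_apply _ _ _
      simp only [_root_.map_mul, Polynomial.aeval_C, map_pow, Polynomial.aeval_X,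
        Algebra.algebraMap_self, RingHom.id_apply] at h1
      have h2 : Polynomial.aeval t q = q.eval t := by
        rw [Polynomial.coe_aeval_eq_eval]
      rw [← h2, h1]
      have h3 : (fun s : Σ α : A, Fin (n (hd α)) × Fin (n (tl α)) => y s * t ^ e s.1)
          = fun s => t ^ e s.1 * y s := by
        funext s; ring
      rw [h3]
      rfl
    have hqconst : q = Polynomial.C (MvPolynomial.eval y f) := by
      have hzero : q - Polynomial.C (MvPolynomial.eval y f) = 0 := by
        apply Polynomial.eq_zero_of_infinite_isRoot
        apply Set.Infinite.mono (s := {t : F | t ≠ 0})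
        · intro t ht
          simp only [Set.mem_setOf_eq, Polynomial.IsRoot, Polynomial.eval_sub,
            Polynomial.eval_C]
          rw [heval t, hscale t ht y, sub_self]
        · have hset : ({t : F | t ≠ 0} : Set F) = {(0 : F)}ᶜ := by ext t; simp
          rw [hset]
          exact (Set.finite_singleton 0).infinite_compl
      linear_combination (norm := ring_nf) hzero
    have h0 : q.eval 0 = MvPolynomial.eval (fun _ => (0 : F)) f := by
      rw [heval 0]
      have h4 : (fun s : Σ α : A, Fin (n (hd α)) × Fin (n (tl α)) => (0 : F) ^ e s.1 * y s)
          = fun _ => (0 : F) := by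
        funext s
        rw [zero_pow (he s.1).ne', zero_mul]
      rw [h4]
    rw [hqconst, Polynomial.eval_C] at h0
    exact h0
  refine ⟨MvPolynomial.eval (fun _ => (0 : F)) f, ?_⟩
  apply MvPolynomial.funext
  intro y
  rw [hconst y, MvPolynomial.eval_C]
end
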